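/- Define the test formula |h| ≥ |U| − n as (|h| ≥ n+1) −∗ ⊥. Then for every SL-structure (U, s, h) with U finite or infinite, and every n ∈ ℕ, (U, s, h) ⊨ |h| ≥ |U| − n if and only if |dom(h)| ≥ |U| − n (as cardinals, where for infinite U the condition |dom(h)| ≥ |U| − n is interpreted as: there do not exist n+1 or more locations outside dom(h); equivalently |U ∖ dom(h)| ≤ n). -/

import Mathlib

/-- Domain of a heap: locations where the heap is defined. -/
def hdom {U : Type*} {k : ℕ} (h : U → Option (Fin k → U)) : Set U := {u | (h u).isSome}

/-- Two heaps are disjoint iff their domains are disjoint. -/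
def hdisj {U : Type*} {k : ℕ} (h₁ h₂ : U → Option (Fin k → U)) : Prop :=
  ∀ u, h₁ u = none ∨ h₂ u = none

private lemma mk_eq_ncard {α : Type*} {s : Set α} (hs : s.Finite) :
    Cardinal.mk ↥s = (s.ncard : Cardinal) := by
  have := hs.fintype
  simp only [Cardinal.mk_fintype, Set.ncard_eq_toFinset_card', Set.toFinset_card]

/-- `|h| ≥ |U| − n ≝ (|h| ≥ n+1) −∗ ⊥` holds in `(U,s,h)` iff
there do not exist `n+1` or more locations outside `dom(h)`, i.e.
`|U ∖ dom(h)| ≤ n`.  The magic wand with consequent `⊥` says no heap `h'`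
disjoint from `h` satisfies `|h| ≥ n+1`. -/
theorem stmt4 {U : Type*} [Nonempty U] [Countable U] {k : ℕ} (hk : 1 ≤ k)
    (h : U → Option (Fin k → U)) (hfin : (hdom h).Finite) (n : ℕ) :
    (∀ h' : U → Option (Fin k → U),
        (hdom h').Finite → hdisj h h' → ¬ (n + 1 ≤ (hdom h').ncard))
    ↔ Cardinal.mk ↥((hdom h)ᶜ) ≤ (n : Cardinal) := by
  classical
  constructor
  · intro H
    by_contra hc
    push_neg at hc
    -- obtain a subset S of (hdom h)ᶜ with ncard = n+1
    obtain ⟨S, hSsub, hSfin, hScard⟩ :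
        ∃ S ⊆ (hdom h)ᶜ, S.Finite ∧ S.ncard = n + 1 := by
      rcases Set.finite_or_infinite ((hdom h)ᶜ) with hf | hi
      · have hmk : Cardinal.mk ↥((hdom h)ᶜ) = ((hdom h)ᶜ.ncard : Cardinal) :=
          mk_eq_ncard hf
        rw [hmk, Nat.cast_lt] at hc
        obtain ⟨S, hSsub, hScard⟩ := Set.exists_subset_card_eq (n := n + 1) hc
        exact ⟨S, hSsub, hf.subset hSsub, hScard⟩
      · obtain ⟨S, hSsub, hSfin, hScard⟩ := hi.exists_subset_ncard_eq (n + 1)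
        exact ⟨S, hSsub, hSfin, hScard⟩
    set h' : U → Option (Fin k → U) := fun u => if u ∈ S then some (fun _ => u) else none
    have hdomh' : hdom h' = S := by
      ext u
      simp [hdom, h']
    refine H h' (hdomh' ▸ hSfin) ?_ ?_
    · intro u
      by_cases hu : u ∈ S
      · left
        have hmem : u ∈ (hdom h)ᶜ := hSsub hu
        simp only [hdom, Set.mem_compl_iff, Set.mem_setOf_eq, Option.isSome_iff_exists,
          not_exists] at hmem
        cases hh : h u with
        | none => rfl
        | some v => exact absurd hh (hmem v)
      · right; simp [h', hu]
    · rw [hdomh', hScard]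
  · intro hc h' hfin' hd hcard
    have hsub : hdom h' ⊆ (hdom h)ᶜ := by
      intro u hu
      rcases hd u with h1 | h2
      · simpa [hdom] using h1
      · exfalso; simp [hdom, h2] at hu
    have := (Cardinal.mk_le_mk_of_subset hsub).trans hc
    rw [mk_eq_ncard hfin', Nat.cast_le] at this
    omega
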